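/- Let N ⊆ ℝ^m be a nonempty closed set and x ∈ ℝ^m \ N. If q ∈ N is the unique nearest point of N to x, and moreover q remains the unique limit of nearest points along sequences converging to x (equivalently, π_N is single-valued and continuous at x via upper semicontinuity), then d_N is differentiable at x with gradient (x - q)/|x - q|. -/

import Mathlib

open Set Metric Filter

open scoped RealInnerProductSpace

private lemma sqrt_upper {E : Type*} [NormedAddCommGroup E] [InnerProductSpace ℝ E]
    (a h : E) (hr : 0 < ‖a‖) :
    ‖a + h‖ ≤ ‖a‖ + ⟪a, h⟫ / ‖a‖ + ‖h‖ ^ 2 / (2 * ‖a‖) := by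
  have hsq : ‖a + h‖ ^ 2 = ‖a‖ ^ 2 + 2 * ⟪a, h⟫ + ‖h‖ ^ 2 := by
    rw [← real_inner_self_eq_norm_sq, inner_add_add_self,
      real_inner_self_eq_norm_sq, real_inner_self_eq_norm_sq, real_inner_comm h a]; ring
  have hcs : |⟪a, h⟫| ≤ ‖a‖ * ‖h‖ := abs_real_inner_le_norm a h
  have hcs' : -(‖a‖ * ‖h‖) ≤ ⟪a, h⟫ := neg_le_of_abs_le hcs
  set R := ‖a‖ + ⟪a, h⟫ / ‖a‖ + ‖h‖ ^ 2 / (2 * ‖a‖) with hR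
  have hRmul : R * (2 * ‖a‖) = 2 * ‖a‖ ^ 2 + 2 * ⟪a, h⟫ + ‖h‖ ^ 2 := by
    rw [hR]; field_simp
  have hRpos : 0 ≤ R := by
    have h2 : 0 ≤ R * (2 * ‖a‖) := by nlinarith [sq_nonneg (‖a‖ - ‖h‖)]
    nlinarith
  have hsq2 : ‖a + h‖ ^ 2 ≤ R ^ 2 := by
    have hdiff : R ^ 2 - ‖a + h‖ ^ 2 = (⟪a, h⟫ / ‖a‖ + ‖h‖ ^ 2 / (2 * ‖a‖)) ^ 2 := by
      rw [hR, hsq]; field_simp; ring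
    have h9 : 0 ≤ R ^ 2 - ‖a + h‖ ^ 2 := hdiff ▸ sq_nonneg _
    linarith
  nlinarith [norm_nonneg (a + h)]

private lemma sqrt_lower {E : Type*} [NormedAddCommGroup E] [InnerProductSpace ℝ E]
    (b h : E) (hb : 0 < ‖b‖) :
    ‖b‖ + ⟪b, h⟫ / ‖b‖ ≤ ‖b + h‖ := by
  have h1 : ⟪b, b + h⟫ ≤ ‖b‖ * ‖b + h‖ := real_inner_le_norm b (b + h)
  rw [inner_add_right, real_inner_self_eq_norm_sq] at h1
  rw [← mul_le_mul_iff_right₀ hb]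
  calc ‖b‖ * (‖b‖ + ⟪b, h⟫ / ‖b‖) = ‖b‖ ^ 2 + ⟪b, h⟫ := by field_simp
    _ ≤ ‖b‖ * ‖b + h‖ := h1

/-- If `q` is the unique nearest point of the nonempty closed set `N` to `x ∉ N`, and `q`
remains the unique limit of nearest points along sequences converging to `x`, then `d_N` is
differentiable at `x` with gradient `(x - q)/‖x - q‖`. -/
theorem stmt_8 {m : ℕ} (N : Set (EuclideanSpace ℝ (Fin m)))
    (hN : IsClosed N) (hNne : N.Nonempty)
    (x q : EuclideanSpace ℝ (Fin m)) (hx : x ∉ N)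
    (hqN : q ∈ N) (hqd : dist q x = infDist x N)
    (huniq : ∀ q' ∈ N, dist q' x = infDist x N → q' = q)
    (hcont : ∀ (xs qs : ℕ → EuclideanSpace ℝ (Fin m)),
      Tendsto xs atTop (nhds x) → (∀ j, xs j ∉ N) →
      (∀ j, qs j ∈ N ∧ dist (qs j) (xs j) = infDist (xs j) N) →
      Tendsto qs atTop (nhds q)) :
    HasGradientAt (fun y => infDist y N) (‖x - q‖⁻¹ • (x - q)) x := by
  classical
  -- nearest point selection
  have hproj : ∀ y : EuclideanSpace ℝ (Fin m), ∃ z, z ∈ N ∧ dist z y = infDist y N := by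
    intro y
    obtain ⟨z, hz, hz'⟩ := hN.exists_infDist_eq_dist hNne y
    exact ⟨z, hz, by rw [dist_comm]; exact hz'.symm⟩
  choose p hpN hpd using hproj
  have hd0 : 0 < infDist x N := (hN.notMem_iff_infDist_pos hNne).mp hx
  have hr : ‖x - q‖ = infDist x N := by
    rw [← hqd, dist_comm, dist_eq_norm]
  have hr0 : 0 < ‖x - q‖ := hr ▸ hd0
  -- continuity of the nearest point map at x
  have hp_tendsto : Tendsto p (nhds x) (nhds q) := by
    rw [tendsto_iff_seq_tendsto]
    intro u hu
    set u' : ℕ → EuclideanSpace ℝ (Fin m) := fun j => if u j ∈ N then x else u j with hu'def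
    have hu'N : ∀ j, u' j ∉ N := by
      intro j; simp only [u']
      split
      · exact hx
      · assumption
    have hevN : ∀ᶠ j in atTop, u j ∉ N := hu (hN.isOpen_compl.mem_nhds hx)
    have hev : ∀ᶠ j in atTop, u' j = u j := by
      filter_upwards [hevN] with j hj
      simp only [u', if_neg hj]
    have hu't : Tendsto u' atTop (nhds x) := hu.congr' (hev.mono fun j h => h.symm)
    have hq' := hcont u' (fun j => p (u' j)) hu't hu'N (fun j => ⟨hpN _, hpd _⟩)
    refine hq'.congr' ?_
    filter_upwards [hev] with j h
    simp only [Function.comp, h]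
  -- the normalized direction map
  have hxq : x - q ≠ 0 := sub_ne_zero.2 (by rintro rfl; exact hx hqN)
  have hw : Tendsto (fun y => ‖x - p y‖⁻¹ • (x - p y)) (nhds x)
      (nhds (‖x - q‖⁻¹ • (x - q))) := by
    have hc2 : ContinuousAt (fun z : EuclideanSpace ℝ (Fin m) => ‖z‖⁻¹ • z) (x - q) :=
      (continuous_norm.continuousAt.inv₀ (norm_ne_zero_iff.2 hxq)).smul continuousAt_id
    exact hc2.tendsto.comp (tendsto_const_nhds.sub hp_tendsto)
  set v : EuclideanSpace ℝ (Fin m) := ‖x - q‖⁻¹ • (x - q) with hv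
  have hε : Tendsto (fun y => ‖(‖x - p y‖⁻¹ • (x - p y)) - v‖) (nhds x) (nhds 0) := by
    have := (hw.sub (tendsto_const_nhds (x := v))).norm
    simpa using this
  rw [hasGradientAt_iff_isLittleO, Asymptotics.isLittleO_iff]
  intro c hc
  have h1 : ∀ᶠ y in nhds x, ‖(‖x - p y‖⁻¹ • (x - p y)) - v‖ ≤ c / 2 :=
    hε.eventually (eventually_le_nhds (by linarith))
  have h2 : ∀ᶠ y in nhds x, ‖y - x‖ / (2 * ‖x - q‖) ≤ c / 2 := by
    have : Tendsto (fun y : EuclideanSpace ℝ (Fin m) => ‖y - x‖ / (2 * ‖x - q‖)) (nhds x) (nhds 0) := by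
      have h0 : Tendsto (fun y : EuclideanSpace ℝ (Fin m) => y - x) (nhds x) (nhds 0) := by
        have := (tendsto_id (x := nhds x)).sub (tendsto_const_nhds (x := x))
        simpa using this
      simpa using h0.norm.div_const (2 * ‖x - q‖)
    exact this.eventually (eventually_le_nhds (by linarith))
  filter_upwards [h1, h2] with y hy1 hy2
  -- notation
  set h := y - x with hh
  have hb0 : 0 < ‖x - p y‖ := by
    have : infDist x N ≤ dist x (p y) := infDist_le_dist_of_mem (hpN y)
    rw [dist_eq_norm] at this
    linarith
  have hinner_v : ⟪v, h⟫ = ⟪x - q, h⟫ / ‖x - q‖ := by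
    rw [hv, real_inner_smul_left]; ring
  -- upper bound
  have hup : infDist y N - infDist x N - ⟪v, h⟫ ≤ ‖h‖ ^ 2 / (2 * ‖x - q‖) := by
    have h3 : infDist y N ≤ ‖(x - q) + h‖ := by
      have : infDist y N ≤ dist y q := infDist_le_dist_of_mem hqN
      rw [dist_eq_norm] at this
      rw [show (x - q) + h = y - q by rw [hh]; abel]; exact this
    have h4 := sqrt_upper (x - q) h hr0
    rw [hinner_v, ← hr]
    linarith
  -- lower bound
  have hlow : -((c / 2) * ‖h‖) ≤ infDist y N - infDist x N - ⟪v, h⟫ := by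
    set b := x - p y with hb
    have h5 : ‖b + h‖ = infDist y N := by
      have : infDist y N = ‖p y - y‖ := by rw [← hpd y, dist_eq_norm]
      rw [this, ← norm_neg]
      congr 1
      rw [hb, hh]; abel
    have h6 : infDist x N ≤ ‖b‖ := by
      have : infDist x N ≤ dist x (p y) := infDist_le_dist_of_mem (hpN y)
      rwa [dist_eq_norm] at this
    have h7 := sqrt_lower b h hb0
    have h8 : ⟪(‖b‖⁻¹ • b) - v, h⟫ = ⟪b, h⟫ / ‖b‖ - ⟪v, h⟫ := by
      rw [inner_sub_left, real_inner_smul_left]; ring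
    have h9 : -(‖(‖b‖⁻¹ • b) - v‖ * ‖h‖) ≤ ⟪(‖b‖⁻¹ • b) - v, h⟫ :=
      neg_le_of_abs_le (abs_real_inner_le_norm _ _)
    have h10 : ‖(‖b‖⁻¹ • b) - v‖ * ‖h‖ ≤ (c / 2) * ‖h‖ :=
      mul_le_mul_of_nonneg_right hy1 (norm_nonneg h)
    linarith
  have habs : |infDist y N - infDist x N - ⟪v, h⟫| ≤ c * ‖h‖ := by
    have hub : ‖h‖ ^ 2 / (2 * ‖x - q‖) = (‖h‖ / (2 * ‖x - q‖)) * ‖h‖ := by ring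
    rw [abs_le]
    constructor
    · have : (c / 2) * ‖h‖ ≤ c * ‖h‖ :=
        mul_le_mul_of_nonneg_right (by linarith) (norm_nonneg h)
      linarith
    · have : (‖h‖ / (2 * ‖x - q‖)) * ‖h‖ ≤ (c / 2) * ‖h‖ :=
        mul_le_mul_of_nonneg_right hy2 (norm_nonneg h)
      have h2' : (c / 2) * ‖h‖ ≤ c * ‖h‖ :=
        mul_le_mul_of_nonneg_right (by linarith) (norm_nonneg h)
      rw [hub] at hup
      linarith
  simpa [Real.norm_eq_abs] using habs
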